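/- arXiv:1611.01619 — 5 statements merged into one kernel-verified Lean document; each statement's English description precedes it below -/
import Mathlib

section
/- For all real numbers x, y and every real p ≥ 2, the inequality |x+y|^p ≤ 2^p p^2 |x|^p + |y|^p + p·x·|y|^{p-1}·sgn(y) + 2^p p^2 x^2 |y|^{p-2} holds (with the convention that the last two terms are interpreted as 0 when y = 0). -/
open Real

lemma exp_quad_neg (u : ℝ) (hu : u ≤ 0) : Real.exp u ≤ 1 + u + u ^ 2 := by
  have ha : 1 - u ≤ Real.exp (-u) := by have := Real.add_one_le_exp (-u); linarith
  have hb : Real.exp u * Real.exp (-u) = 1 := by rw [← Real.exp_add]; simp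
  have hc : Real.exp u * (1 - u) ≤ 1 := by
    calc Real.exp u * (1 - u) ≤ Real.exp u * Real.exp (-u) :=
          mul_le_mul_of_nonneg_left ha (Real.exp_pos u).le
    _ = 1 := hb
  have hcube : u ^ 3 ≤ 0 := by nlinarith [sq_nonneg u]
  nlinarith [Real.exp_pos u, hc, hcube]

lemma exp_quad_pos (u : ℝ) (hu : 0 ≤ u) : Real.exp u ≤ 1 + u + u ^ 2 * Real.exp u := by
  have ha : 1 - u ≤ Real.exp (-u) := by have := Real.add_one_le_exp (-u); linarith
  have hb : Real.exp u * Real.exp (-u) = 1 := by rw [← Real.exp_add]; simp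
  have h5 : Real.exp u * (1 - u) * (1 + u) ≤ Real.exp u * Real.exp (-u) * (1 + u) :=
    mul_le_mul_of_nonneg_right
      (mul_le_mul_of_nonneg_left ha (Real.exp_pos u).le) (by linarith)
  nlinarith [h5, hb]

-- core one-variable inequality
lemma star_aux (t p : ℝ) (hp : 2 ≤ p) :
    |1 + t| ^ p ≤ 2 ^ p * p ^ 2 * |t| ^ p + 1 + p * t + 2 ^ p * p ^ 2 * t ^ 2 := by
  have hp0 : (0:ℝ) ≤ p := by linarith
  have h4 : (4:ℝ) ≤ 2 ^ p := by
    have h := Real.rpow_le_rpow_of_exponent_le (one_le_two) hp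
    have e : (2:ℝ) ^ (2:ℝ) = 4 := by
      rw [show ((2:ℝ)) = ((2:ℕ):ℝ) by norm_num, Real.rpow_natCast]; norm_num
    linarith [e ▸ h]
  have htp : (0:ℝ) ≤ |t| ^ p := Real.rpow_nonneg (abs_nonneg t) p
  rcases le_or_gt (1/2) |t| with hA | hB
  · rcases le_or_gt 1 |t| with hA2 | hA1
    · -- |t| ≥ 1
      have h1 : |1 + t| ≤ 2 * |t| := (abs_add_le 1 t).trans (by rw [abs_one]; linarith)
      have h2 : |1 + t| ^ p ≤ (2 * |t|) ^ p :=
        Real.rpow_le_rpow (abs_nonneg _) h1 hp0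
      have h3 : (2 * |t|) ^ p = 2 ^ p * |t| ^ p :=
        Real.mul_rpow (by norm_num) (abs_nonneg t)
      have h6 : |t| ≤ |t| ^ p := by
        calc |t| = |t| ^ (1:ℝ) := (Real.rpow_one _).symm
        _ ≤ |t| ^ p := Real.rpow_le_rpow_of_exponent_le hA2 (by linarith)
      have hneg : -(p * |t|) ≤ p * t := by nlinarith [neg_abs_le t]
      have h7 : (0:ℝ) ≤ 2 ^ p * p ^ 2 - 2 ^ p - p := by
        nlinarith [mul_nonneg (sub_nonneg.2 h4) (show (0:ℝ) ≤ p^2 - 1 by nlinarith)]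
      nlinarith [mul_nonneg h7 htp, mul_nonneg hp0 (sub_nonneg.2 h6),
        mul_nonneg (mul_nonneg (by linarith : (0:ℝ) ≤ 2 ^ p) (sq_nonneg p)) (sq_nonneg t)]
    · -- 1/2 ≤ |t| < 1
      have h1 : |1 + t| ≤ 2 := (abs_add_le 1 t).trans (by rw [abs_one]; linarith)
      have h2 : |1 + t| ^ p ≤ 2 ^ p :=
        Real.rpow_le_rpow (abs_nonneg _) h1 hp0
      have hneg : -(p * |t|) ≤ p * t := by nlinarith [neg_abs_le t]
      have habs : |t| ≤ 2 * t ^ 2 := by nlinarith [sq_abs t, abs_nonneg t]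
      have ht2 : 1/4 ≤ t ^ 2 := by nlinarith [sq_abs t]
      nlinarith [htp, mul_nonneg (sub_nonneg.2 h4) (show (0:ℝ) ≤ p^2 - 4 by nlinarith),
        mul_nonneg (show (0:ℝ) ≤ 2^p * p^2 - 2*p by nlinarith)
          (show (0:ℝ) ≤ t^2 - 1/4 by linarith),
        mul_nonneg hp0 (show (0:ℝ) ≤ 2*t^2 - |t| by linarith)]
  · -- |t| < 1/2
    obtain ⟨hb1, hb2⟩ := abs_lt.mp hB
    have h1 : (0:ℝ) < 1 + t := by linarith
    have e : |1 + t| = 1 + t := abs_of_pos h1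
    have hlog : Real.log (1 + t) ≤ t := by
      have := Real.log_le_sub_one_of_pos h1; linarith
    have h3 : (1 + t) ^ p ≤ Real.exp (p * t) := by
      rw [Real.rpow_def_of_pos h1]
      exact Real.exp_le_exp.2 (by nlinarith)
    have hexp : Real.exp (p * t) ≤ 1 + p * t + 2 ^ p * p ^ 2 * t ^ 2 := by
      rcases le_or_gt (p * t) 0 with hun | hup
      · have hd := exp_quad_neg (p * t) hun
        nlinarith [mul_nonneg (show (0:ℝ) ≤ 2^p - 1 by linarith)
          (mul_nonneg (sq_nonneg p) (sq_nonneg t))]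
      · have hd := exp_quad_pos (p * t) hup.le
        have hup2 : p * t ≤ p / 2 := by nlinarith
        have he1 : Real.exp (p * t) ≤ Real.exp (p/2) := Real.exp_le_exp.2 hup2
        have he2 : Real.exp (p/2) ≤ 2 ^ p := by
          rw [Real.rpow_def_of_pos (by norm_num : (0:ℝ) < 2)]
          apply Real.exp_le_exp.2
          nlinarith [Real.log_two_gt_d9]
        have he3 : (p*t) ^ 2 * Real.exp (p*t) ≤ (p*t) ^ 2 * (2 ^ p) :=
          mul_le_mul_of_nonneg_left (he1.trans he2) (sq_nonneg _)
        nlinarith [hd, he3]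
    calc |1 + t| ^ p = (1 + t) ^ p := by rw [e]
    _ ≤ Real.exp (p * t) := h3
    _ ≤ 1 + p * t + 2 ^ p * p ^ 2 * t ^ 2 := hexp
    _ ≤ 2 ^ p * p ^ 2 * |t| ^ p + 1 + p * t + 2 ^ p * p ^ 2 * t ^ 2 := by
        nlinarith [mul_nonneg (mul_nonneg (by linarith : (0:ℝ) ≤ 2^p) (sq_nonneg p)) htp]

lemma key_pos (x y p : ℝ) (hp : 2 ≤ p) (hy : 0 < y) :
    |x + y| ^ p ≤ 2 ^ p * p ^ 2 * |x| ^ p + y ^ p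
      + p * x * y ^ (p - 1) + 2 ^ p * p ^ 2 * x ^ 2 * y ^ (p - 2) := by
  have hy0 : y ≠ 0 := hy.ne'
  set t := x / y with ht
  have hx : x = t * y := by rw [ht, div_mul_cancel₀ x hy0]
  have hyp : (0:ℝ) < y ^ p := Real.rpow_pos_of_pos hy p
  have e1 : |x + y| ^ p = |1 + t| ^ p * y ^ p := by
    rw [hx, show t * y + y = (1 + t) * y by ring, abs_mul, abs_of_pos hy,
      Real.mul_rpow (abs_nonneg _) hy.le]
  have e2 : |x| ^ p = |t| ^ p * y ^ p := by
    rw [hx, abs_mul, abs_of_pos hy, Real.mul_rpow (abs_nonneg _) hy.le]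
  have e3 : y ^ (p - 1) * y = y ^ p := by
    rw [Real.rpow_sub hy, Real.rpow_one]; field_simp
  have e4 : y ^ (p - 2) * y ^ 2 = y ^ p := by
    rw [Real.rpow_sub hy, show y ^ ((2:ℝ)) = y ^ (2:ℕ) by
      rw [show ((2:ℝ)) = ((2:ℕ):ℝ) by norm_num, Real.rpow_natCast]]
    field_simp
  have e5 : p * x * y ^ (p - 1) = p * t * y ^ p := by
    rw [hx]; rw [← e3]; ring
  have e6 : x ^ 2 * y ^ (p - 2) = t ^ 2 * y ^ p := by
    rw [hx]; rw [← e4]; ring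
  have h := star_aux t p hp
  have h2 := mul_le_mul_of_nonneg_right h hyp.le
  calc |x + y| ^ p = |1 + t| ^ p * y ^ p := e1
  _ ≤ (2 ^ p * p ^ 2 * |t| ^ p + 1 + p * t + 2 ^ p * p ^ 2 * t ^ 2) * y ^ p := h2
  _ = 2 ^ p * p ^ 2 * (|t| ^ p * y ^ p) + y ^ p + p * t * y ^ p
      + 2 ^ p * p ^ 2 * (t ^ 2 * y ^ p) := by ring
  _ = 2 ^ p * p ^ 2 * |x| ^ p + y ^ p + p * x * y ^ (p - 1)
      + 2 ^ p * p ^ 2 * x ^ 2 * y ^ (p - 2) := by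
      rw [e2, e5, ← e6]; ring

theorem stmt_0 (x y p : ℝ) (hp : 2 ≤ p) :
    |x + y| ^ p ≤
      2 ^ p * p ^ 2 * |x| ^ p + |y| ^ p +
        (if y = 0 then 0 else
          p * x * |y| ^ (p - 1) * Real.sign y + 2 ^ p * p ^ 2 * x ^ 2 * |y| ^ (p - 2)) := by
  rcases lt_trichotomy y 0 with hy | hy | hy
  · rw [if_neg hy.ne, Real.sign_of_neg hy, abs_of_neg hy]
    have h := key_pos (-x) (-y) p hp (by linarith)
    rw [show -x + -y = -(x + y) by ring, abs_neg, abs_neg] at h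
    calc |x + y| ^ p ≤ 2 ^ p * p ^ 2 * |x| ^ p + (-y) ^ p
        + p * (-x) * (-y) ^ (p - 1) + 2 ^ p * p ^ 2 * (-x) ^ 2 * (-y) ^ (p - 2) := h
    _ = 2 ^ p * p ^ 2 * |x| ^ p + (-y) ^ p
        + (p * x * (-y) ^ (p - 1) * (-1) + 2 ^ p * p ^ 2 * x ^ 2 * (-y) ^ (p - 2)) := by ring
  · subst hy
    rw [if_pos rfl, add_zero, abs_zero, Real.zero_rpow (by linarith : p ≠ 0)]
    have h4 : (4:ℝ) ≤ 2 ^ p := by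
      have h := Real.rpow_le_rpow_of_exponent_le (one_le_two) hp
      have e : (2:ℝ) ^ (2:ℝ) = 4 := by
        rw [show ((2:ℝ)) = ((2:ℕ):ℝ) by norm_num, Real.rpow_natCast]; norm_num
      linarith [e ▸ h]
    have hxp : (0:ℝ) ≤ |x| ^ p := Real.rpow_nonneg (abs_nonneg x) p
    nlinarith [mul_nonneg (show (0:ℝ) ≤ 2^p*p^2 - 1 by nlinarith) hxp]
  · rw [if_neg hy.ne', Real.sign_of_pos hy, abs_of_pos hy]
    have h := key_pos x y p hp hy
    calc |x + y| ^ p ≤ 2 ^ p * p ^ 2 * |x| ^ p + y ^ p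
        + p * x * y ^ (p - 1) + 2 ^ p * p ^ 2 * x ^ 2 * y ^ (p - 2) := h
    _ = 2 ^ p * p ^ 2 * |x| ^ p + y ^ p
        + (p * x * y ^ (p - 1) * 1 + 2 ^ p * p ^ 2 * x ^ 2 * y ^ (p - 2)) := by ring
end

section
/- For every real t ≥ 0, ln(1+t) ≥ t/(1+t) + (t^2/(2(1+t)^2))·(1 + (2/3)·ln(1+t)). -/
open Real Set

private lemma key_deriv (x : ℝ) (hx : 0 ≤ x) :
    HasDerivAt (fun y : ℝ => Real.log (1 + y) - (6*y + 9*y^2)/(4*y^2 + 12*y + 6))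
      (1/(1+x) - ((6 + 18*x)*(4*x^2 + 12*x + 6) - (6*x + 9*x^2)*(8*x + 12))/(4*x^2 + 12*x + 6)^2) x := by
  have hv : 4*x^2 + 12*x + 6 ≠ 0 := by nlinarith
  have h1 : HasDerivAt (fun y : ℝ => Real.log (1 + y)) (1/(1+x)) x := by
    have h := (Real.hasDerivAt_log (by linarith : (1:ℝ)+x ≠ 0)).comp x
      ((hasDerivAt_id x).const_add 1)
    simpa [Function.comp_def] using h
  have hu : HasDerivAt (fun y : ℝ => 6*y + 9*y^2) (6 + 18*x) x := by
    have := (((hasDerivAt_id x).const_mul 6).add ((hasDerivAt_pow 2 x).const_mul 9))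
    exact this.congr_deriv (by ring)
  have hw : HasDerivAt (fun y : ℝ => 4*y^2 + 12*y + 6) (8*x + 12) x := by
    have := ((((hasDerivAt_pow 2 x).const_mul 4).add ((hasDerivAt_id x).const_mul 12)).add_const 6)
    exact this.congr_deriv (by ring)
  exact h1.sub (hu.div hw hv)

private lemma key (t : ℝ) (ht : 0 ≤ t) :
    Real.log (1 + t) ≥ (6*t + 9*t^2)/(4*t^2 + 12*t + 6) := by
  set f : ℝ → ℝ := fun y => Real.log (1 + y) - (6*y + 9*y^2)/(4*y^2 + 12*y + 6) with hf
  have hmono : MonotoneOn f (Ici (0:ℝ)) := by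
    apply monotoneOn_of_deriv_nonneg (convex_Ici 0)
    · exact fun x hx => ((key_deriv x hx).differentiableAt).continuousAt.continuousWithinAt
    · intro x hx
      rw [interior_Ici] at hx
      exact ((key_deriv x hx.le).differentiableAt).differentiableWithinAt
    · intro x hx
      rw [interior_Ici] at hx
      have hx0 : 0 < x := hx
      rw [(key_deriv x hx0.le).deriv]
      have h1 : (0:ℝ) < 1 + x := by linarith
      have h2 : (0:ℝ) < 4*x^2 + 12*x + 6 := by nlinarith
      rw [sub_nonneg, div_le_div_iff₀ (by positivity) h1]
      nlinarith [mul_pos (mul_pos hx0 hx0) hx0, mul_pos (mul_pos (mul_pos hx0 hx0) hx0) hx0]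
  have h0 : f 0 = 0 := by simp [hf]
  have := hmono (self_mem_Ici) (mem_Ici.mpr ht) ht
  rw [h0] at this
  have h2 : (0:ℝ) < 4*t^2 + 12*t + 6 := by nlinarith
  simp only [hf] at this
  linarith [this]

theorem stmt_1 (t : ℝ) (ht : 0 ≤ t) :
    Real.log (1 + t) ≥
      t / (1 + t) + t ^ 2 / (2 * (1 + t) ^ 2) * (1 + 2 / 3 * Real.log (1 + t)) := by
  have hk := key t ht
  have hs : (0:ℝ) < 1 + t := by linarith
  have hv : (0:ℝ) < 4*t^2 + 12*t + 6 := by nlinarith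
  rw [ge_iff_le, div_le_iff₀ hv] at hk
  rw [ge_iff_le, ← sub_nonneg]
  have h1 : Real.log (1+t) - (t / (1 + t) + t ^ 2 / (2 * (1 + t) ^ 2) * (1 + 2 / 3 * Real.log (1 + t)))
      = ((4*t^2 + 12*t + 6) * Real.log (1+t) - (6*t + 9*t^2)) / (6 * (1+t)^2) := by
    field_simp
    ring
  rw [h1]
  apply div_nonneg
  · nlinarith [hk]
  · positivity
end

section
/- For every real y > 0 and every real u with u ≤ y, e^{tu} ≤ 1 + t·u + ((e^{ty} - 1 - t·y)/y^2)·u^2 for all t > 0. -/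
lemma exp_sub_integral_rep (x : ℝ) :
    Real.exp x - 1 - x = x ^ 2 * ∫ s in (0:ℝ)..1, (1 - s) * Real.exp (x * s) := by
  rcases eq_or_ne x 0 with h | h
  · simp [h]
  · have hd : ∀ s ∈ Set.uIcc (0:ℝ) 1,
        HasDerivAt (fun s => (1 - s) * Real.exp (x * s) / x + Real.exp (x * s) / x ^ 2)
          ((1 - s) * Real.exp (x * s)) s := by
      intro s _
      have h1 : HasDerivAt (fun s : ℝ => Real.exp (x * s)) (Real.exp (x * s) * x) s := by
        simpa [mul_comm, Function.comp_def] using (Real.hasDerivAt_exp (x * s)).comp s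
          ((hasDerivAt_id s).const_mul x)
      have h2 : HasDerivAt (fun s : ℝ => (1 - s)) (-1) s := by
        simpa using ((hasDerivAt_id s).const_sub 1)
      have h3 := ((h2.mul h1).div_const x).add (h1.div_const (x ^ 2))
      refine h3.congr_deriv ?_
      field_simp
      ring
    have hcont : IntervalIntegrable (fun s => (1 - s) * Real.exp (x * s))
        MeasureTheory.volume 0 1 :=
      (Continuous.mul (by continuity) (by continuity)).intervalIntegrable 0 1
    rw [intervalIntegral.integral_eq_sub_of_hasDerivAt hd hcont]
    field_simp
    simp only [mul_zero, Real.exp_zero]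
    ring

theorem stmt_3 (y u t : ℝ) (hy : 0 < y) (hu : u ≤ y) (ht : 0 < t) :
    Real.exp (t * u) ≤ 1 + t * u + (Real.exp (t * y) - 1 - t * y) / y ^ 2 * u ^ 2 := by
  set a := t * u with ha
  set b := t * y with hb
  have hab : a ≤ b := by
    apply mul_le_mul_of_nonneg_left hu ht.le
  have hb0 : 0 < b := mul_pos ht hy
  have hInt : (∫ s in (0:ℝ)..1, (1 - s) * Real.exp (a * s)) ≤
      ∫ s in (0:ℝ)..1, (1 - s) * Real.exp (b * s) := by
    apply intervalIntegral.integral_mono_on (by norm_num)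
    · exact (Continuous.mul (by continuity) (by continuity)).intervalIntegrable 0 1
    · exact (Continuous.mul (by continuity) (by continuity)).intervalIntegrable 0 1
    · intro s hs
      have h1 : (0:ℝ) ≤ 1 - s := by linarith [hs.2]
      have : Real.exp (a * s) ≤ Real.exp (b * s) :=
        Real.exp_le_exp.mpr (mul_le_mul_of_nonneg_right hab hs.1)
      exact mul_le_mul_of_nonneg_left this h1
  have key : Real.exp a - 1 - a ≤ a ^ 2 * ∫ s in (0:ℝ)..1, (1 - s) * Real.exp (b * s) := by
    rw [exp_sub_integral_rep a]
    exact mul_le_mul_of_nonneg_left hInt (sq_nonneg a)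
  have hbrep := exp_sub_integral_rep b
  have hIb : (∫ s in (0:ℝ)..1, (1 - s) * Real.exp (b * s)) = (Real.exp b - 1 - b) / b ^ 2 := by
    field_simp [pow_ne_zero 2 hb0.ne'] at hbrep ⊢
    linarith [hbrep]
  rw [hIb] at key
  have hrhs : a ^ 2 * ((Real.exp b - 1 - b) / b ^ 2) =
      (Real.exp (t * y) - 1 - t * y) / y ^ 2 * u ^ 2 := by
    rw [ha, hb]
    field_simp
  rw [hrhs] at key
  linarith [key]
end

section
/- Let (M_k, F_k)_{k=0..n} be a square-integrable martingale on a probability space with M_0 = 0 and differences d_k = M_k - M_{k-1}. Then E[(max_{0≤k≤n} (M_n - M_k))^2] ≤ E[Σ_{k=1}^n E[d_k^2 | F_{k-1}]]. -/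
open MeasureTheory

lemma sup'_succ_aux (M : ℕ → ℝ) (n : ℕ) :
    ((Finset.range (n + 1 + 1)).sup' (by simp) fun k => M (n+1) - M k) =
      max (((Finset.range (n + 1)).sup' (by simp) fun k => M n - M k) + (M (n+1) - M n)) 0 := by
  have h1 : (((Finset.range (n + 1)).sup' (by simp) fun k => M n - M k) + (M (n+1) - M n))
      = (Finset.range (n + 1)).sup' (by simp) fun k => M (n+1) - M k := by
    rw [Finset.comp_sup'_eq_sup'_comp (by simp) (fun x => x + (M (n+1) - M n))
      (fun x y => (max_add_add_right x y _).symm)]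
    exact Finset.sup'_congr _ rfl (fun k _ => by simp only [Function.comp_apply]; ring)
  have h2 := Finset.sup'_congr (by simp : (Finset.range (n+1+1)).Nonempty)
    (Finset.range_add_one (n := n+1)) (fun x _ => rfl (a := M (n+1) - M x))
  rw [h1, h2, Finset.sup'_insert Finset.nonempty_range_add_one, sub_self, max_comm]

lemma abs_mul_le_sq_add_sq (x y : ℝ) : |x * y| ≤ x ^ 2 + y ^ 2 := by
  rw [abs_mul]
  nlinarith [sq_nonneg (|x| - |y|), abs_nonneg x, abs_nonneg y, sq_abs x, sq_abs y]

theorem stmt_6 {Ω : Type*} {m : MeasurableSpace Ω} {μ : Measure Ω} [IsProbabilityMeasure μ]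
    (ℱ : Filtration ℕ m) (M : ℕ → Ω → ℝ) (n : ℕ)
    (hM : Martingale M ℱ μ) (hM0 : ∀ ω, M 0 ω = 0)
    (hsq : ∀ k, Integrable (fun ω => (M k ω) ^ 2) μ) :
    ∫ ω, ((Finset.range (n + 1)).sup' (by simp) fun k => M n ω - M k ω) ^ 2 ∂μ ≤
      ∫ ω, ∑ k ∈ Finset.Icc 1 n,
        (μ[fun ω' => (M k ω' - M (k - 1) ω') ^ 2 | ℱ (k - 1)]) ω ∂μ := by
  have hint : ∀ k, Integrable (M k) μ := fun k => hM.integrable k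
  have hL2 : ∀ k, MemLp (M k) 2 μ := fun k =>
    (memLp_two_iff_integrable_sq (hint k).aestronglyMeasurable).2 (hsq k)
  set G : ℕ → Ω → ℝ := fun n ω => (Finset.range (n + 1)).sup' (by simp) fun k => M n ω - M k ω
    with hGdef
  have hGrec : ∀ n ω, G (n + 1) ω = max (G n ω + (M (n+1) ω - M n ω)) 0 := fun n ω =>
    sup'_succ_aux (fun k => M k ω) n
  have hG0 : ∀ ω, G 0 ω = 0 := fun ω => by
    simp [hGdef, Finset.range_one]
  -- measurability
  have hGm : ∀ n, StronglyMeasurable[ℱ n] (G n) := by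
    intro n
    induction n with
    | zero =>
        have : G 0 = fun _ => (0 : ℝ) := funext hG0
        rw [this]; exact stronglyMeasurable_const
    | succ n ih =>
        have : G (n + 1) = fun ω => max (G n ω + (M (n+1) ω - M n ω)) 0 := funext (hGrec n)
        rw [this]
        exact (((ih.mono (ℱ.mono (Nat.le_succ n))).add
          ((hM.stronglyAdapted (n+1)).sub ((hM.stronglyAdapted n).mono (ℱ.mono (Nat.le_succ n))))).measurable.max
          measurable_const).stronglyMeasurable
  -- L² bound
  have hGL2 : ∀ n, MemLp (G n) 2 μ := by
    intro n
    induction n with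
    | zero =>
        have : G 0 = fun _ => (0 : ℝ) := funext hG0
        rw [this]; exact memLp_const 0
    | succ n ih =>
        have hsum : MemLp (fun ω => G n ω + (M (n+1) ω - M n ω)) 2 μ :=
          ih.add ((hL2 (n+1)).sub (hL2 n))
        refine MemLp.of_le hsum
          (((hGm (n+1)).mono (ℱ.le _)).aestronglyMeasurable) (Filter.Eventually.of_forall ?_)
        intro ω
        rw [hGrec n ω]
        simp only [Real.norm_eq_abs]
        rcases le_or_gt (G n ω + (M (n+1) ω - M n ω)) 0 with h | h
        · simp [max_eq_right h, abs_nonneg]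
        · rw [max_eq_left h.le]
  -- main induction
  clear hGdef
  induction n with
  | zero =>
      have h1 : ∀ ω, G 0 ω ^ 2 = 0 := fun ω => by rw [hG0 ω]; ring
      simp [h1]
  | succ n ih =>
      set d : Ω → ℝ := fun ω => M (n+1) ω - M n ω with hd
      have hdL2 : MemLp d 2 μ := (hL2 (n+1)).sub (hL2 n)
      have hdint : Integrable d μ := (hint (n+1)).sub (hint n)
      have hGsq : Integrable (fun ω => G n ω ^ 2) μ :=
        (memLp_two_iff_integrable_sq ((hGL2 n).aestronglyMeasurable)).1 (hGL2 n)
      have hG1sq : Integrable (fun ω => G (n+1) ω ^ 2) μ :=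
        (memLp_two_iff_integrable_sq ((hGL2 (n+1)).aestronglyMeasurable)).1 (hGL2 (n+1))
      have hdsq : Integrable (fun ω => d ω ^ 2) μ :=
        (memLp_two_iff_integrable_sq hdL2.aestronglyMeasurable).1 hdL2
      have hsumL2 : MemLp (fun ω => G n ω + d ω) 2 μ := (hGL2 n).add hdL2
      have hsumsq : Integrable (fun ω => (G n ω + d ω) ^ 2) μ :=
        (memLp_two_iff_integrable_sq hsumL2.aestronglyMeasurable).1 hsumL2
      -- cross term integrable
      have hGd : Integrable (fun ω => G n ω * d ω) μ := by
        refine Integrable.mono' (hGsq.add hdsq)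
          ((((hGm n).mono (ℱ.le n)).mul
            (((hM.stronglyAdapted (n+1) : StronglyMeasurable[ℱ (n+1)] (M (n+1))).mono (ℱ.le _)).sub
              ((hM.stronglyAdapted n).mono (ℱ.le n)))).aestronglyMeasurable)
          (Filter.Eventually.of_forall fun ω => ?_)
        simpa only [Real.norm_eq_abs, Pi.add_apply] using abs_mul_le_sq_add_sq (G n ω) (d ω)
      -- cross term vanishes
      have hd0 : μ[d | ℱ n] =ᵐ[μ] 0 := by
        have h1 : μ[d | ℱ n] =ᵐ[μ] μ[M (n+1) | ℱ n] - μ[M n | ℱ n] :=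
          condExp_sub (hint (n+1)) (hint n) _
        have h2 : μ[M (n+1) | ℱ n] =ᵐ[μ] M n := hM.condExp_ae_eq (Nat.le_succ n)
        have h3 : μ[M n | ℱ n] = M n :=
          condExp_of_stronglyMeasurable (ℱ.le n) (hM.stronglyAdapted n) (hint n)
        filter_upwards [h1, h2] with ω h1 h2
        simp only [h1, Pi.sub_apply, h2, h3, sub_self, Pi.zero_apply]
      have hcross : ∫ ω, G n ω * d ω ∂μ = 0 := by
        have hpull : μ[(fun ω => G n ω * d ω) | ℱ n] =ᵐ[μ] fun ω => G n ω * (μ[d | ℱ n]) ω :=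
          condExp_mul_of_stronglyMeasurable_left (hGm n) hGd hdint
        calc ∫ ω, G n ω * d ω ∂μ = ∫ ω, (μ[(fun ω => G n ω * d ω) | ℱ n]) ω ∂μ :=
              (integral_condExp (ℱ.le n)).symm
          _ = ∫ ω, G n ω * (μ[d | ℱ n]) ω ∂μ := integral_congr_ae hpull
          _ = 0 := by
              rw [← integral_zero Ω ℝ (μ := μ)]
              refine integral_congr_ae ?_
              filter_upwards [hd0] with ω h
              simp [h]
      -- pointwise square bound
      have hptw : ∀ ω, G (n+1) ω ^ 2 ≤ (G n ω + d ω) ^ 2 := by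
        intro ω
        rw [hGrec n ω]
        rcases le_or_gt (G n ω + d ω) 0 with h | h
        · rw [max_eq_right h]; simpa using sq_nonneg (G n ω + d ω)
        · rw [max_eq_left h.le]
      have hstep1 : ∫ ω, G (n+1) ω ^ 2 ∂μ ≤ ∫ ω, (G n ω + d ω) ^ 2 ∂μ :=
        integral_mono hG1sq hsumsq hptw
      -- expand the square
      have hexp : ∫ ω, (G n ω + d ω) ^ 2 ∂μ
          = ∫ ω, G n ω ^ 2 ∂μ + 2 * ∫ ω, G n ω * d ω ∂μ + ∫ ω, d ω ^ 2 ∂μ := by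
        have : (fun ω => (G n ω + d ω) ^ 2)
            = fun ω => G n ω ^ 2 + 2 * (G n ω * d ω) + d ω ^ 2 := by
          funext ω; ring
        have hB : Integrable (fun ω => 2 * (G n ω * d ω)) μ := hGd.const_mul 2
        have hA : Integrable (fun ω => G n ω ^ 2 + 2 * (G n ω * d ω)) μ := hGsq.add hB
        rw [this, integral_add hA hdsq, integral_add hGsq hB, integral_const_mul]
      -- conditional expectation of d² has same integral
      have hdce : ∫ ω, d ω ^ 2 ∂μ = ∫ ω, (μ[(fun ω' => d ω' ^ 2) | ℱ n]) ω ∂μ :=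
        (integral_condExp (ℱ.le n)).symm
      -- RHS splitting
      have hIcc : Finset.Icc 1 (n + 1) = insert (n + 1) (Finset.Icc 1 n) := by
        ext x
        simp only [Finset.mem_Icc, Finset.mem_insert]
        omega
      have hRHS : ∫ ω, ∑ k ∈ Finset.Icc 1 (n+1),
            (μ[fun ω' => (M k ω' - M (k - 1) ω') ^ 2 | ℱ (k - 1)]) ω ∂μ
          = (∫ ω, ∑ k ∈ Finset.Icc 1 n,
              (μ[fun ω' => (M k ω' - M (k - 1) ω') ^ 2 | ℱ (k - 1)]) ω ∂μ)
            + ∫ ω, (μ[(fun ω' => d ω' ^ 2) | ℱ n]) ω ∂μ := by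
        have hsplit : ∀ ω, ∑ k ∈ Finset.Icc 1 (n+1),
              (μ[fun ω' => (M k ω' - M (k - 1) ω') ^ 2 | ℱ (k - 1)]) ω
            = (∑ k ∈ Finset.Icc 1 n,
                (μ[fun ω' => (M k ω' - M (k - 1) ω') ^ 2 | ℱ (k - 1)]) ω)
              + (μ[(fun ω' => d ω' ^ 2) | ℱ n]) ω := by
          intro ω
          rw [hIcc, Finset.sum_insert (by simp)]
          simp only [Nat.add_sub_cancel, hd]
          ring
        simp only [hsplit]
        rw [integral_add
          (integrable_finset_sum _ (fun k _ => integrable_condExp)) integrable_condExp]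
      rw [hRHS]
      have := ih
      linarith [hstep1, hexp, hcross, hdce, ih]
end

section
/- Let (a_n)_{n≥0} be a real sequence with Σ_{n=0}^∞ |a_n| < ∞, and let a = Σ_{n=0}^∞ a_n. Extend a_n = 0 for n < 0, and define a_{n,i} = (Σ_{k=1}^n a_{i-k})/√n for i ≥ 1. Then (i) sup_{i≥1} |a_{n,i}| ≤ n^{-1/2}·Σ_{j=0}^∞ |a_j| → 0 as n → ∞, and (ii) Σ_{i=1}^∞ a_{n,i}^2 → a^2 as n → ∞. -/
open Filter Finset

private lemma stmt8_tele (b : ℕ → ℝ) (n : ℕ) (i : ℤ) :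
    ∑ k ∈ Finset.Icc 1 n, (if 0 ≤ i - (k : ℤ) then b (i - (k : ℤ)).toNat else 0)
      = (∑ j ∈ Finset.range i.toNat, b j) - ∑ j ∈ Finset.range (i - (n : ℤ)).toNat, b j := by
  set G : ℤ → ℝ := fun z => ∑ j ∈ Finset.range z.toNat, b j with hG
  have step : ∀ z : ℤ, (if 0 ≤ z then b z.toNat else 0) = G (z + 1) - G z := by
    intro z
    by_cases hz : 0 ≤ z
    · have h1 : (z + 1).toNat = z.toNat + 1 := by omega
      simp [hz, hG, h1, Finset.sum_range_succ]
    · have h0 : z.toNat = 0 := by omega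
      have h2 : (z + 1).toNat = 0 := by omega
      simp [hz, hG, h0, h2]
  have hcong : ∀ k ∈ Finset.Icc 1 n,
      (if 0 ≤ i - (k : ℤ) then b (i - (k : ℤ)).toNat else 0)
        = (fun j : ℕ => G (i - (j : ℤ))) (k - 1) - (fun j : ℕ => G (i - (j : ℤ))) k := by
    intro k hk
    have hk1 : 1 ≤ k := (Finset.mem_Icc.1 hk).1
    have : ((k - 1 : ℕ) : ℤ) = (k : ℤ) - 1 := by omega
    rw [step (i - (k : ℤ))]
    simp only [this]
    ring_nf
  rw [Finset.sum_congr rfl hcong]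
  have : Finset.Icc 1 n = Finset.Ico 1 (n + 1) := by
    ext x; simp [Nat.lt_succ_iff]
  rw [this, Finset.sum_Ico_eq_sum_range]
  simp only [Nat.add_sub_cancel, Nat.add_sub_cancel_left]
  have h4 : ∀ j ∈ Finset.range n,
      G (i - (j : ℤ)) - G (i - ((1 + j : ℕ) : ℤ))
        = (fun j : ℕ => G (i - (j : ℤ))) j - (fun j : ℕ => G (i - (j : ℤ))) (j + 1) := by
    intro j _
    simp only
    congr 3
    omega
  rw [Finset.sum_congr rfl h4, Finset.sum_range_sub' (fun j : ℕ => G (i - (j : ℤ)))]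
  simp only [Nat.cast_zero, sub_zero, hG]

theorem stmt_8 (a : ℕ → ℝ) (hsum : Summable fun n => |a n|)
    (aZ : ℤ → ℝ) (haZ : ∀ m : ℤ, aZ m = if 0 ≤ m then a m.toNat else 0)
    (A : ℕ → ℕ → ℝ)
    (hA : ∀ n i, A n i = (∑ k ∈ Finset.Icc 1 n, aZ ((i : ℤ) - (k : ℤ))) / Real.sqrt n) :
    (∀ n : ℕ, 1 ≤ n → ∀ i : ℕ, 1 ≤ i →
        |A n i| ≤ (n : ℝ) ^ (-(1 / 2 : ℝ)) * ∑' j, |a j|) ∧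
      Tendsto (fun n => ⨆ i : {i : ℕ // 1 ≤ i}, |A n i|) atTop (nhds 0) ∧
      Tendsto (fun n => ∑' i : ℕ, A n (i + 1) ^ 2) atTop (nhds ((∑' j, a j) ^ 2)) := by
  set S : ℝ := ∑' j, |a j| with hSdef
  set T : ℕ → ℝ := fun m => ∑ j ∈ Finset.range m, a j with hTdef
  have hS0 : 0 ≤ S := tsum_nonneg fun _ => abs_nonneg _
  -- closed form for the numerator
  have key : ∀ n i : ℕ, ∑ k ∈ Finset.Icc 1 n, aZ ((i : ℤ) - (k : ℤ)) = T i - T (i - n) := by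
    intro n i
    have h1 : ∀ k ∈ Finset.Icc 1 n, aZ ((i : ℤ) - (k : ℤ))
        = (if 0 ≤ (i : ℤ) - (k : ℤ) then a ((i : ℤ) - (k : ℤ)).toNat else 0) := fun k _ => haZ _
    rw [Finset.sum_congr rfl h1, stmt8_tele a n (i : ℤ)]
    have h2 : ((i : ℤ)).toNat = i := Int.toNat_natCast i
    have h3 : ((i : ℤ) - (n : ℤ)).toNat = i - n := by omega
    rw [h2, h3]
  have habs : ∀ n i : ℕ, |T i - T (i - n)| ≤ S := by
    intro n i
    have hle : i - n ≤ i := Nat.sub_le i n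
    have : T i - T (i - n) = ∑ j ∈ Finset.Ico (i - n) i, a j := by
      rw [hTdef]; exact (Finset.sum_Ico_eq_sub _ hle).symm
    rw [this]
    calc |∑ j ∈ Finset.Ico (i - n) i, a j| ≤ ∑ j ∈ Finset.Ico (i - n) i, |a j| :=
          Finset.abs_sum_le_sum_abs _ _
      _ ≤ S := Summable.sum_le_tsum _ (fun _ _ => abs_nonneg _) hsum
  -- part (i)
  have part1 : ∀ n : ℕ, 1 ≤ n → ∀ i : ℕ, 1 ≤ i →
      |A n i| ≤ (n : ℝ) ^ (-(1 / 2 : ℝ)) * S := by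
    intro n hn i _
    have hs : 0 < Real.sqrt n := Real.sqrt_pos.2 (by exact_mod_cast hn)
    have hrpow : (n : ℝ) ^ (-(1 / 2 : ℝ)) = (Real.sqrt n)⁻¹ := by
      rw [Real.rpow_neg (Nat.cast_nonneg n), Real.sqrt_eq_rpow]
    rw [hA, key, abs_div, abs_of_pos hs, hrpow, inv_mul_eq_div]
    gcongr
    exact habs n i
  refine ⟨part1, ?_, ?_⟩
  · -- sup tends to zero
    have hne : Nonempty {i : ℕ // 1 ≤ i} := ⟨⟨1, le_rfl⟩⟩
    have hlim : Tendsto (fun n : ℕ => (n : ℝ) ^ (-(1 / 2 : ℝ)) * S) atTop (nhds 0) := by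
      have h1 : Tendsto (fun x : ℝ => x ^ (-(1 / 2 : ℝ))) atTop (nhds 0) :=
        tendsto_rpow_neg_atTop (by norm_num)
      have := (h1.comp tendsto_natCast_atTop_atTop).mul_const S
      simpa using this
    apply tendsto_of_tendsto_of_tendsto_of_le_of_le' tendsto_const_nhds hlim
    · filter_upwards [eventually_ge_atTop 1] with n hn
      have hbdd : BddAbove (Set.range fun i : {i : ℕ // 1 ≤ i} => |A n i|) :=
        ⟨(n : ℝ) ^ (-(1 / 2 : ℝ)) * S, by rintro y ⟨i, rfl⟩; exact part1 n hn i i.2⟩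
      exact le_trans (abs_nonneg (A n 1)) (le_ciSup hbdd ⟨1, le_rfl⟩)
    · filter_upwards [eventually_ge_atTop 1] with n hn
      exact ciSup_le fun i => part1 n hn i i.2
  · -- main limit
    have ha : Summable a := hsum.of_abs
    -- tails
    set R : ℕ → ℝ := fun p => ∑' j, |a (j + p)| with hRdef
    have hRsummable : ∀ p : ℕ, Summable fun j => |a (j + p)| := fun p =>
      (summable_nat_add_iff p).2 hsum
    have hR0 : ∀ p, 0 ≤ R p := fun p => tsum_nonneg fun _ => abs_nonneg _
    have hRlim : Tendsto R atTop (nhds 0) := tendsto_sum_nat_add fun j => |a j|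
    -- windows
    have hshift : ∀ k : ℕ, Summable fun i : ℕ => |a (i + 1 + k)| := by
      intro k
      have := (summable_nat_add_iff (1 + k)).2 hsum
      refine this.congr fun i => ?_
      have e : i + (1 + k) = i + 1 + k := by omega
      rw [e]
    have hwsummable : ∀ n : ℕ, Summable fun i : ℕ => ∑ k ∈ Finset.range n, |a (i + 1 + k)| :=
      fun n => summable_sum fun k _ => hshift k
    have hw_le_R : ∀ n i : ℕ, ∑ k ∈ Finset.range n, |a (i + 1 + k)| ≤ R (i + 1) := by
      intro n i
      have h1 : ∀ k ∈ Finset.range n, |a (i + 1 + k)| = |a (k + (i + 1))| := by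
        intro k _
        have e : i + 1 + k = k + (i + 1) := by omega
        rw [e]
      rw [Finset.sum_congr rfl h1]
      exact Summable.sum_le_tsum _ (fun _ _ => abs_nonneg _) (hRsummable (i + 1))
    have hRS : ∀ p : ℕ, R p ≤ S :=
      fun p => Summable.tsum_le_tsum_of_inj (· + p) (add_left_injective p)
        (fun j _ => abs_nonneg _) (fun j => le_rfl) (hRsummable p) hsum
    have hw_tsum : ∀ n : ℕ, ∑' i, ∑ k ∈ Finset.range n, |a (i + 1 + k)|
        = ∑ k ∈ Finset.range n, R (k + 1) := by
      intro n
      rw [Summable.tsum_finsetSum fun k _ => hshift k]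
      refine Finset.sum_congr rfl fun k _ => ?_
      rw [hRdef]
      refine tsum_congr fun i => ?_
      have e : i + (k + 1) = i + 1 + k := by omega
      rw [e]
    -- the shifted differences
    have hd_sq : ∀ n i : ℕ, (T (i + 1 + n) - T (i + 1)) ^ 2
        ≤ S * ∑ k ∈ Finset.range n, |a (i + 1 + k)| := by
      intro n i
      set w := ∑ k ∈ Finset.range n, |a (i + 1 + k)| with hwdef
      have hw0 : 0 ≤ w := Finset.sum_nonneg fun _ _ => abs_nonneg _
      have habs' : |T (i + 1 + n) - T (i + 1)| ≤ w := by
        have hle : i + 1 ≤ i + 1 + n := by omega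
        have : T (i + 1 + n) - T (i + 1) = ∑ j ∈ Finset.Ico (i + 1) (i + 1 + n), a j := by
          rw [hTdef]; exact (Finset.sum_Ico_eq_sub _ hle).symm
        rw [this]
        calc |∑ j ∈ Finset.Ico (i + 1) (i + 1 + n), a j|
            ≤ ∑ j ∈ Finset.Ico (i + 1) (i + 1 + n), |a j| := Finset.abs_sum_le_sum_abs _ _
          _ = w := by
              rw [Finset.sum_Ico_eq_sum_range, hwdef]
              have hsub : i + 1 + n - (i + 1) = n := by omega
              rw [hsub]
      have hwS : w ≤ S := (hw_le_R n i).trans (hRS (i + 1))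
      calc (T (i + 1 + n) - T (i + 1)) ^ 2 = |T (i + 1 + n) - T (i + 1)| ^ 2 := (sq_abs _).symm
        _ ≤ w ^ 2 := pow_le_pow_left₀ (abs_nonneg _) habs' 2
        _ = w * w := sq w
        _ ≤ S * w := mul_le_mul_of_nonneg_right hwS hw0
    have hdsummable : ∀ n : ℕ, Summable fun i => (T (i + 1 + n) - T (i + 1)) ^ 2 := fun n =>
      Summable.of_nonneg_of_le (fun i => sq_nonneg _) (fun i => hd_sq n i)
        ((hwsummable n).mul_left S)
    have hd_tsum_le : ∀ n : ℕ, ∑' i, (T (i + 1 + n) - T (i + 1)) ^ 2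
        ≤ S * ∑ k ∈ Finset.range n, R (k + 1) := by
      intro n
      calc ∑' i, (T (i + 1 + n) - T (i + 1)) ^ 2
          ≤ ∑' i, S * ∑ k ∈ Finset.range n, |a (i + 1 + k)| :=
            Summable.tsum_le_tsum (fun i => hd_sq n i) (hdsummable n) ((hwsummable n).mul_left S)
        _ = S * ∑' i, ∑ k ∈ Finset.range n, |a (i + 1 + k)| := tsum_mul_left
        _ = S * ∑ k ∈ Finset.range n, R (k + 1) := by rw [hw_tsum n]
    -- summability of the full sequence
    have hesummable : ∀ n : ℕ, Summable fun i => (T (i + 1) - T (i + 1 - n)) ^ 2 := by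
      intro n
      refine (summable_nat_add_iff n).1 ?_
      refine (hdsummable n).congr fun i => ?_
      have h2 : i + n + 1 - n = i + 1 := by omega
      have h1 : i + n + 1 = i + 1 + n := by omega
      rw [h2, h1]
    -- the decomposition for n ≥ 1
    have hdecomp : ∀ n : ℕ, 1 ≤ n → (∑' i : ℕ, A n (i + 1) ^ 2)
        = (n : ℝ)⁻¹ * ∑ i ∈ Finset.range n, T (i + 1) ^ 2
          + (∑' i, (T (i + 1 + n) - T (i + 1)) ^ 2) / n := by
      intro n hn
      have hnpos : (0 : ℝ) < n := by exact_mod_cast hn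
      have hAe : ∀ i : ℕ, A n (i + 1) ^ 2 = (T (i + 1) - T (i + 1 - n)) ^ 2 / n := by
        intro i
        rw [hA, key]
        rw [div_pow, Real.sq_sqrt (Nat.cast_nonneg n)]
      calc (∑' i : ℕ, A n (i + 1) ^ 2) = ∑' i : ℕ, (T (i + 1) - T (i + 1 - n)) ^ 2 / n := by
            exact tsum_congr hAe
        _ = (∑' i : ℕ, (T (i + 1) - T (i + 1 - n)) ^ 2) / n := tsum_div_const
        _ = (∑ i ∈ Finset.range n, (T (i + 1) - T (i + 1 - n)) ^ 2
              + ∑' i, (T (i + n + 1) - T (i + n + 1 - n)) ^ 2) / n := by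
            rw [Summable.sum_add_tsum_nat_add n (hesummable n)]
        _ = (∑ i ∈ Finset.range n, T (i + 1) ^ 2 + ∑' i, (T (i + 1 + n) - T (i + 1)) ^ 2) / n := by
            congr 1
            congr 1
            · refine Finset.sum_congr rfl fun i hi => ?_
              have hi' : i < n := Finset.mem_range.1 hi
              have h1 : i + 1 - n = 0 := by omega
              rw [h1]
              simp [hTdef]
            · refine tsum_congr fun i => ?_
              have h2 : i + n + 1 - n = i + 1 := by omega
              have h1 : i + n + 1 = i + 1 + n := by omega
              rw [h2, h1]
        _ = (n : ℝ)⁻¹ * ∑ i ∈ Finset.range n, T (i + 1) ^ 2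
              + (∑' i, (T (i + 1 + n) - T (i + 1)) ^ 2) / n := by
            rw [add_div, inv_mul_eq_div]
    -- limits
    have hT : Tendsto T atTop (nhds (∑' j, a j)) := ha.hasSum.tendsto_sum_nat
    have h1 : Tendsto (fun i : ℕ => T (i + 1) ^ 2) atTop (nhds ((∑' j, a j) ^ 2)) :=
      (hT.comp (tendsto_add_atTop_nat 1)).pow 2
    have hterm1 : Tendsto (fun n : ℕ => (n : ℝ)⁻¹ * ∑ i ∈ Finset.range n, T (i + 1) ^ 2)
        atTop (nhds ((∑' j, a j) ^ 2)) := h1.cesaro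
    have hterm2 : Tendsto (fun n : ℕ => (∑' i, (T (i + 1 + n) - T (i + 1)) ^ 2) / n)
        atTop (nhds 0) := by
      have hub : Tendsto (fun n : ℕ => S * ((n : ℝ)⁻¹ * ∑ k ∈ Finset.range n, R (k + 1)))
          atTop (nhds 0) := by
        have hR1 : Tendsto (fun k : ℕ => R (k + 1)) atTop (nhds 0) :=
          hRlim.comp (tendsto_add_atTop_nat 1)
        have := hR1.cesaro.const_mul S
        simpa using this
      apply tendsto_of_tendsto_of_tendsto_of_le_of_le' tendsto_const_nhds hub
      · filter_upwards [eventually_ge_atTop 1] with n hn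
        have hnpos : (0 : ℝ) < n := by exact_mod_cast hn
        exact div_nonneg (tsum_nonneg fun i => sq_nonneg _) hnpos.le
      · filter_upwards [eventually_ge_atTop 1] with n hn
        have hnpos : (0 : ℝ) < n := by exact_mod_cast hn
        rw [div_le_iff₀ hnpos]
        calc ∑' i, (T (i + 1 + n) - T (i + 1)) ^ 2
            ≤ S * ∑ k ∈ Finset.range n, R (k + 1) := hd_tsum_le n
          _ = S * ((n : ℝ)⁻¹ * ∑ k ∈ Finset.range n, R (k + 1)) * n := by
              field_simp
    have := hterm1.add hterm2
    rw [add_zero] at this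
    apply this.congr'
    filter_upwards [eventually_ge_atTop 1] with n hn
    exact (hdecomp n hn).symm
end
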